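/- For t ≥ 0 and β ∈ ℝ, the pressure P(t,β) := lim_n (1/n) log ∑_{ω∈ℕ^n} q_n(ω)^{−2t} ∏ ω_i^{−2β} satisfies the upper bound P(t,β) ≤ (1/2) log ∑_{(k,l)∈ℕ²} (kl)^{−2(t+β)} (1 + 1/(k(l+1)))^{−2t}. -/

import Mathlib

open Filter ENNReal

/-- Denominators of the convergents: `q_n = ω_n q_{n-1} + q_{n-2}`, `q_{-1} = 0`, `q_0 = 1`. -/
def qRec (a : ℕ → ℕ) : ℕ → ℕ
  | 0 => 1
  | 1 => a 1
  | n + 2 => a (n + 2) * qRec a (n + 1) + qRec a n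

section QRec
variable {a b : ℕ → ℕ} (ha : ∀ i, 1 ≤ a i)

lemma qRec_congr : ∀ n, (∀ i, i ≤ n → a i = b i) → qRec a n = qRec b n
  | 0, _ => rfl
  | 1, h => by simp [qRec, h 1 le_rfl]
  | n + 2, h => by
    simp only [qRec, h (n+2) le_rfl,
      qRec_congr (n+1) (fun i hi => h i (by omega)),
      qRec_congr n (fun i hi => h i (by omega))]

include ha

lemma qRec_pos : ∀ n, 1 ≤ qRec a n
  | 0 => le_rfl
  | 1 => ha 1
  | n + 2 => by
    have := qRec_pos n
    simp only [qRec]; omega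

lemma qRec_mono (n : ℕ) : qRec a n ≤ qRec a (n + 1) := by
  cases n with
  | zero => exact ha 1
  | succ n =>
    show qRec a (n+1) ≤ qRec a (n+2)
    have h1 := ha (n+2)
    have h2 := qRec_pos ha n
    simp only [qRec]
    nlinarith [qRec_pos ha (n+1)]

lemma qRec_succ_le (n : ℕ) : qRec a (n + 1) ≤ (a (n + 1) + 1) * qRec a n := by
  cases n with
  | zero => simp [qRec]
  | succ n =>
    show qRec a (n+2) ≤ (a (n+2) + 1) * qRec a (n+1)
    have := qRec_mono ha n
    have h3 : qRec a (n+2) = a (n + 2) * qRec a (n + 1) + qRec a n := rfl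
    nlinarith

omit ha in
lemma qRec_succ_ge (n : ℕ) : a (n + 1) * qRec a n ≤ qRec a (n + 1) := by
  cases n with
  | zero => simp [qRec]
  | succ n =>
    show a (n+2) * qRec a (n+1) ≤ qRec a (n+2)
    have h3 : qRec a (n+2) = a (n + 2) * qRec a (n + 1) + qRec a n := rfl
    omega

lemma qRec_two_step_lower (n : ℕ) :
    a (n + 1) * (a (n + 2) * (a (n + 1) + 1) + 1) * qRec a n ≤ (a (n + 1) + 1) * qRec a (n + 2) := by
  have h1 : qRec a (n + 1) ≤ (a (n + 1) + 1) * qRec a n := qRec_succ_le ha n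
  have h2 : a (n + 1) * qRec a n ≤ qRec a (n + 1) := qRec_succ_ge n
  have h3 : qRec a (n+2) = a (n + 2) * qRec a (n + 1) + qRec a n := rfl
  have k1 : (a (n+2) * (a (n+1) + 1)) * (a (n + 1) * qRec a n) ≤ (a (n+2) * (a (n+1) + 1)) * qRec a (n + 1) :=
    Nat.mul_le_mul_left _ h2
  nlinarith [qRec_pos ha n, qRec_pos ha (n+1)]

lemma qRec_two_step_upper (n : ℕ) :
    qRec a (n + 2) ≤ 4 * a (n + 1) * a (n + 2) * qRec a n := by
  have h1 : qRec a (n + 1) ≤ (a (n + 1) + 1) * qRec a n := qRec_succ_le ha n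
  have h3 : qRec a (n+2) = a (n + 2) * qRec a (n + 1) + qRec a n := rfl
  have h4 := ha (n+1)
  have h5 := ha (n+2)
  have k1 : a (n+2) * qRec a (n + 1) ≤ a (n+2) * ((a (n + 1) + 1) * qRec a n) :=
    Nat.mul_le_mul_left _ h1
  have k2 : a (n+2) * (a (n + 1) + 1) + 1 ≤ 4 * a (n + 1) * a (n + 2) := by nlinarith
  have k3 : (a (n+2) * (a (n + 1) + 1) + 1) * qRec a n ≤ (4 * a (n + 1) * a (n + 2)) * qRec a n :=
    Nat.mul_le_mul_right _ k2
  nlinarith [qRec_pos ha n]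

end QRec

/-- The continued fraction denominator `q_n(ω)` of a finite word `ω ∈ ℕ^n`. -/
def wordQ {n : ℕ} (w : Fin n → ℕ+) : ℕ :=
  qRec (fun i => if h : 1 ≤ i ∧ i ≤ n then (w ⟨i - 1, by omega⟩ : ℕ) else 1) n

/-- The digit function associated to a word. -/
def aw {n : ℕ} (w : Fin n → ℕ+) : ℕ → ℕ :=
  fun i => if h : 1 ≤ i ∧ i ≤ n then (w ⟨i - 1, by omega⟩ : ℕ) else 1

lemma aw_one_le {n : ℕ} (w : Fin n → ℕ+) (i : ℕ) : 1 ≤ aw w i := by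
  unfold aw; split
  · exact (w _).pos
  · exact le_rfl

lemma wordQ_eq {n : ℕ} (w : Fin n → ℕ+) : wordQ w = qRec (aw w) n := rfl

/-- Extend a word by two digits. -/
def extW {n : ℕ} (w : Fin n → ℕ+) (c d : ℕ+) : Fin (n + 2) → ℕ+ :=
  fun i => if h : (i : ℕ) < n then w ⟨i, h⟩ else if (i : ℕ) = n then c else d

lemma aw_extW_of_le {n : ℕ} (w : Fin n → ℕ+) (c d : ℕ+) {i : ℕ} (hi : i ≤ n) :
    aw (extW w c d) i = aw w i := by
  unfold aw extW
  rcases Nat.eq_zero_or_pos i with h0 | h0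
  · subst h0; simp
  · have h1 : 1 ≤ i ∧ i ≤ n + 2 := ⟨h0, by omega⟩
    have h2 : 1 ≤ i ∧ i ≤ n := ⟨h0, hi⟩
    rw [dif_pos h1, dif_pos h2, dif_pos (show i - 1 < n by omega)]

lemma aw_extW_n1 {n : ℕ} (w : Fin n → ℕ+) (c d : ℕ+) : aw (extW w c d) (n + 1) = c := by
  unfold aw extW
  rw [dif_pos (show 1 ≤ n + 1 ∧ n + 1 ≤ n + 2 by omega)]
  simp only [Nat.add_sub_cancel]
  rw [dif_neg (by simp), if_pos (by simp)]

lemma aw_extW_n2 {n : ℕ} (w : Fin n → ℕ+) (c d : ℕ+) : aw (extW w c d) (n + 2) = d := by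
  unfold aw extW
  rw [dif_pos (show 1 ≤ n + 2 ∧ n + 2 ≤ n + 2 by omega)]
  simp only [Nat.add_sub_cancel]
  rw [dif_neg (by simp), if_neg (by simp)]

lemma qRec_aw_extW {n : ℕ} (w : Fin n → ℕ+) (c d : ℕ+) :
    qRec (aw (extW w c d)) n = wordQ w :=
  qRec_congr n (fun i hi => aw_extW_of_le w c d hi)

lemma wordQ_extW_lower {n : ℕ} (w : Fin n → ℕ+) (c d : ℕ+) :
    (c : ℕ) * ((d : ℕ) * ((c : ℕ) + 1) + 1) * wordQ w ≤ ((c : ℕ) + 1) * wordQ (extW w c d) := by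
  have h := qRec_two_step_lower (aw_one_le (extW w c d)) n
  rwa [aw_extW_n1, aw_extW_n2, qRec_aw_extW, ← wordQ_eq] at h

lemma wordQ_extW_upper {n : ℕ} (w : Fin n → ℕ+) (c d : ℕ+) :
    wordQ (extW w c d) ≤ 4 * (c : ℕ) * (d : ℕ) * wordQ w := by
  have h := qRec_two_step_upper (aw_one_le (extW w c d)) n
  rwa [aw_extW_n1, aw_extW_n2, qRec_aw_extW, ← wordQ_eq] at h

lemma wordQ_pos {n : ℕ} (w : Fin n → ℕ+) : 1 ≤ wordQ w := qRec_pos (aw_one_le w) n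

lemma extW_castSucc {n : ℕ} (w : Fin n → ℕ+) (c d : ℕ+) (i : Fin n) :
    extW w c d (i.castSucc.castSucc) = w i := by
  unfold extW
  rw [dif_pos (show ((i.castSucc.castSucc : Fin (n+2)) : ℕ) < n by simp)]
  exact congrArg w (Fin.ext (by simp))

lemma extW_at_n {n : ℕ} (w : Fin n → ℕ+) (c d : ℕ+) :
    extW w c d ((Fin.last n).castSucc) = c := by
  unfold extW
  rw [dif_neg (by simp), if_pos (by simp)]

lemma extW_at_n1 {n : ℕ} (w : Fin n → ℕ+) (c d : ℕ+) :
    extW w c d (Fin.last (n+1)) = d := by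
  unfold extW
  rw [dif_neg (by simp), if_neg (by simp)]

def wordEquiv (n : ℕ) : ((Fin n → ℕ+) × ℕ+ × ℕ+) ≃ (Fin (n + 2) → ℕ+) where
  toFun p := extW p.1 p.2.1 p.2.2
  invFun w := (fun i => w ⟨i, by omega⟩, w ⟨n, by omega⟩, w ⟨n + 1, by omega⟩)
  left_inv p := by
    ext i
    · simp [extW]
    · simp [extW]
    · simp only [extW]
      rw [dif_neg (by omega), if_neg (by omega)]
  right_inv w := by
    funext i
    simp only [extW]
    rcases Nat.lt_trichotomy (i : ℕ) n with h | h | h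
    · rw [dif_pos h]
    · rw [dif_neg (by omega), if_pos h]
      exact congrArg w (Fin.ext (by simp [h]))
    · rw [dif_neg (by omega), if_neg (by omega)]
      refine congrArg w (Fin.ext ?_)
      have := i.is_lt
      simp; omega

noncomputable section

/-- The `n`-th partition function `Z_n(t,β) = ∑_{ω ∈ ℕ^n} q_n(ω)^{−2t} ∏ ω_i^{−2β}`,
valued in `[0,∞]`. -/
noncomputable def Zpart (t β : ℝ) (n : ℕ) : ℝ≥0∞ :=
  ∑' w : Fin n → ℕ+,
    ((wordQ w : ℝ≥0∞)) ^ (-2 * t) * ∏ i : Fin n, (((w i : ℕ) : ℝ≥0∞)) ^ (-2 * β)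

/-- Summand of the partition function. -/
def sZ (t β : ℝ) {n : ℕ} (w : Fin n → ℕ+) : ℝ≥0∞ :=
  ((wordQ w : ℝ≥0∞)) ^ (-2 * t) * ∏ i : Fin n, (((w i : ℕ) : ℝ≥0∞)) ^ (-2 * β)

lemma Zpart_eq (t β : ℝ) (n : ℕ) : Zpart t β n = ∑' w : Fin n → ℕ+, sZ t β w := rfl

lemma rpow_neg_anti {x y : ℝ≥0∞} (h : x ≤ y) {s : ℝ} (hs : 0 ≤ s) :
    y ^ (-s) ≤ x ^ (-s) := by
  rw [ENNReal.rpow_neg, ENNReal.rpow_neg]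
  exact ENNReal.inv_le_inv.2 (ENNReal.rpow_le_rpow h hs)

/-- The pair factor `F(c,d) = c d (1 + 1/(d(c+1))) = c(d(c+1)+1)/(c+1)` in `ℝ≥0∞`. -/
def Fe (c d : ℕ+) : ℝ≥0∞ :=
  (((c : ℕ) * ((d : ℕ) * ((c : ℕ) + 1) + 1) : ℕ) : ℝ≥0∞) / ((((c : ℕ) + 1 : ℕ)) : ℝ≥0∞)

lemma Fe_ne_top (c d : ℕ+) : Fe c d ≠ ⊤ :=
  (ENNReal.div_lt_top (ENNReal.natCast_ne_top _) (Nat.cast_ne_zero.2 (Nat.succ_ne_zero _))).ne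

lemma Fe_ne_zero (c d : ℕ+) : Fe c d ≠ 0 := by
  refine (ENNReal.div_pos (Nat.cast_ne_zero.2 ?_) (ENNReal.natCast_ne_top _)).ne'
  have hc := c.pos; have hd := d.pos
  positivity

lemma Fe_le (c d : ℕ+) : Fe c d ≤ (c : ℝ≥0∞) * (d : ℝ≥0∞) * 4 := by
  rw [Fe, ENNReal.div_le_iff_le_mul (Or.inl (Nat.cast_ne_zero.2 (Nat.succ_ne_zero _)))
    (Or.inl (ENNReal.natCast_ne_top _))]
  have h : ((c:ℕ) * ((d:ℕ) * ((c:ℕ)+1) + 1) : ℕ) ≤ ((c:ℕ) * (d:ℕ) * 4) * ((c:ℕ) + 1) := by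
    have hc := c.pos; have hd := d.pos
    have k : (c:ℕ) * 1 ≤ (c:ℕ) * ((d:ℕ) * ((c:ℕ) + 1)) :=
      Nat.mul_le_mul_left _ (Nat.one_le_iff_ne_zero.mpr (by positivity))
    nlinarith
  calc (((c : ℕ) * ((d : ℕ) * ((c : ℕ) + 1) + 1) : ℕ) : ℝ≥0∞)
      ≤ ((((c:ℕ) * (d:ℕ) * 4) * ((c:ℕ) + 1) : ℕ) : ℝ≥0∞) := by exact_mod_cast h
    _ = (c : ℝ≥0∞) * (d : ℝ≥0∞) * 4 * ((((c : ℕ) + 1 : ℕ)) : ℝ≥0∞) := by push_cast; ring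

lemma Fe_ge (c d : ℕ+) : (c : ℝ≥0∞) * (d : ℝ≥0∞) ≤ Fe c d := by
  rw [Fe, ENNReal.le_div_iff_mul_le (Or.inl (Nat.cast_ne_zero.2 (Nat.succ_ne_zero _)))
    (Or.inl (ENNReal.natCast_ne_top _))]
  have h : ((c:ℕ) * (d:ℕ)) * ((c:ℕ) + 1) ≤ ((c:ℕ) * ((d:ℕ) * ((c:ℕ)+1) + 1) : ℕ) := by
    nlinarith [c.pos, d.pos]
  calc (c : ℝ≥0∞) * (d : ℝ≥0∞) * ((((c : ℕ) + 1 : ℕ)) : ℝ≥0∞)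
      = ((((c:ℕ) * (d:ℕ)) * ((c:ℕ) + 1) : ℕ) : ℝ≥0∞) := by push_cast; ring
    _ ≤ _ := by exact_mod_cast h

lemma Q_mul_Fe_le {n : ℕ} (w : Fin n → ℕ+) (c d : ℕ+) :
    (wordQ w : ℝ≥0∞) * Fe c d ≤ (wordQ (extW w c d) : ℝ≥0∞) := by
  rw [Fe, ← mul_div_assoc, ENNReal.div_le_iff_le_mul
    (Or.inl (Nat.cast_ne_zero.2 (Nat.succ_ne_zero _))) (Or.inl (ENNReal.natCast_ne_top _))]
  have h := wordQ_extW_lower w c d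
  calc (wordQ w : ℝ≥0∞) * (((c : ℕ) * ((d : ℕ) * ((c : ℕ) + 1) + 1) : ℕ) : ℝ≥0∞)
      = (((c : ℕ) * ((d : ℕ) * ((c : ℕ) + 1) + 1) * wordQ w : ℕ) : ℝ≥0∞) := by
        push_cast; ring
    _ ≤ ((((c : ℕ) + 1) * wordQ (extW w c d) : ℕ) : ℝ≥0∞) := by exact_mod_cast h
    _ = (wordQ (extW w c d) : ℝ≥0∞) * ((((c : ℕ) + 1 : ℕ)) : ℝ≥0∞) := by push_cast; ring

lemma Q_ext_le {n : ℕ} (w : Fin n → ℕ+) (c d : ℕ+) :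
    (wordQ (extW w c d) : ℝ≥0∞) ≤ 4 * (c : ℝ≥0∞) * (d : ℝ≥0∞) * (wordQ w : ℝ≥0∞) := by
  have h := wordQ_extW_upper w c d
  calc (wordQ (extW w c d) : ℝ≥0∞) ≤ ((4 * (c:ℕ) * (d:ℕ) * wordQ w : ℕ) : ℝ≥0∞) := by
        exact_mod_cast h
    _ = 4 * (c : ℝ≥0∞) * (d : ℝ≥0∞) * (wordQ w : ℝ≥0∞) := by push_cast; ring

variable (t β : ℝ)

/-- The pair weight `G(c,d) = F(c,d)^{-2t} c^{-2β} d^{-2β}`. -/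
def Gw (c d : ℕ+) : ℝ≥0∞ :=
  Fe c d ^ (-2 * t) * ((c : ℕ) : ℝ≥0∞) ^ (-2 * β) * ((d : ℕ) : ℝ≥0∞) ^ (-2 * β)

/-- The lower pair weight `H(c,d) = (4cd)^{-2t} c^{-2β} d^{-2β}`. -/
def Hw (c d : ℕ+) : ℝ≥0∞ :=
  (4 * ((c : ℕ) : ℝ≥0∞) * ((d : ℕ) : ℝ≥0∞)) ^ (-2 * t) *
    ((c : ℕ) : ℝ≥0∞) ^ (-2 * β) * ((d : ℕ) : ℝ≥0∞) ^ (-2 * β)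

def SG : ℝ≥0∞ := ∑' q : ℕ+ × ℕ+, Gw t β q.1 q.2
def SH : ℝ≥0∞ := ∑' q : ℕ+ × ℕ+, Hw t β q.1 q.2

lemma prodExt {n : ℕ} (w : Fin n → ℕ+) (c d : ℕ+) :
    ∏ i : Fin (n+2), (((extW w c d i : ℕ) : ℝ≥0∞)) ^ (-2 * β) =
      (∏ i : Fin n, (((w i : ℕ) : ℝ≥0∞)) ^ (-2 * β)) *
        ((c : ℕ) : ℝ≥0∞) ^ (-2 * β) * ((d : ℕ) : ℝ≥0∞) ^ (-2 * β) := by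
  rw [Fin.prod_univ_castSucc (f := fun i : Fin (n+2) => (((extW w c d i : ℕ) : ℝ≥0∞)) ^ (-2 * β)),
    Fin.prod_univ_castSucc (f := fun i : Fin (n+1) =>
      (((extW w c d i.castSucc : ℕ) : ℝ≥0∞)) ^ (-2 * β))]
  simp only [extW_castSucc, extW_at_n, extW_at_n1]

lemma sZ_ext_le (ht : 0 ≤ t) {n : ℕ} (w : Fin n → ℕ+) (c d : ℕ+) :
    sZ t β (extW w c d) ≤ sZ t β w * Gw t β c d := by
  have hQ : ((wordQ (extW w c d) : ℕ) : ℝ≥0∞) ^ (-2 * t) ≤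
      ((wordQ w : ℕ) : ℝ≥0∞) ^ (-2 * t) * Fe c d ^ (-2 * t) := by
    rw [show (-2 * t) = -(2 * t) by ring]
    calc ((wordQ (extW w c d) : ℕ) : ℝ≥0∞) ^ (-(2 * t))
        ≤ ((wordQ w : ℝ≥0∞) * Fe c d) ^ (-(2 * t)) :=
          rpow_neg_anti (Q_mul_Fe_le w c d) (by linarith)
      _ = ((wordQ w : ℕ) : ℝ≥0∞) ^ (-(2 * t)) * Fe c d ^ (-(2 * t)) :=
          ENNReal.mul_rpow_of_ne_top (by simp) (Fe_ne_top c d) _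
  calc sZ t β (extW w c d)
      = ((wordQ (extW w c d) : ℕ) : ℝ≥0∞) ^ (-2 * t) *
          ((∏ i : Fin n, (((w i : ℕ) : ℝ≥0∞)) ^ (-2 * β)) *
            ((c : ℕ) : ℝ≥0∞) ^ (-2 * β) * ((d : ℕ) : ℝ≥0∞) ^ (-2 * β)) := by
        rw [sZ, prodExt]
    _ ≤ (((wordQ w : ℕ) : ℝ≥0∞) ^ (-2 * t) * Fe c d ^ (-2 * t)) *
          ((∏ i : Fin n, (((w i : ℕ) : ℝ≥0∞)) ^ (-2 * β)) *
            ((c : ℕ) : ℝ≥0∞) ^ (-2 * β) * ((d : ℕ) : ℝ≥0∞) ^ (-2 * β)) :=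
        mul_le_mul_left hQ _
    _ = sZ t β w * Gw t β c d := by rw [sZ, Gw]; ring

lemma sZ_ext_ge (ht : 0 ≤ t) {n : ℕ} (w : Fin n → ℕ+) (c d : ℕ+) :
    sZ t β w * Hw t β c d ≤ sZ t β (extW w c d) := by
  have hQ : ((wordQ w : ℕ) : ℝ≥0∞) ^ (-2 * t) *
      (4 * ((c : ℕ) : ℝ≥0∞) * ((d : ℕ) : ℝ≥0∞)) ^ (-2 * t) ≤
      ((wordQ (extW w c d) : ℕ) : ℝ≥0∞) ^ (-2 * t) := by
    rw [show (-2 * t) = -(2 * t) by ring]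
    calc ((wordQ w : ℕ) : ℝ≥0∞) ^ (-(2 * t)) *
          (4 * ((c : ℕ) : ℝ≥0∞) * ((d : ℕ) : ℝ≥0∞)) ^ (-(2 * t))
        = ((wordQ w : ℝ≥0∞) * (4 * ((c : ℕ) : ℝ≥0∞) * ((d : ℕ) : ℝ≥0∞))) ^ (-(2 * t)) :=
          (ENNReal.mul_rpow_of_ne_top (by simp) (by
            refine ENNReal.mul_ne_top (ENNReal.mul_ne_top ?_ ?_) ?_ <;> simp) _).symm
      _ ≤ ((wordQ (extW w c d) : ℕ) : ℝ≥0∞) ^ (-(2 * t)) := by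
          refine rpow_neg_anti ?_ (by linarith)
          calc ((wordQ (extW w c d) : ℕ) : ℝ≥0∞)
              ≤ 4 * ((c : ℕ) : ℝ≥0∞) * ((d : ℕ) : ℝ≥0∞) * (wordQ w : ℝ≥0∞) := Q_ext_le w c d
            _ = (wordQ w : ℝ≥0∞) * (4 * ((c : ℕ) : ℝ≥0∞) * ((d : ℕ) : ℝ≥0∞)) := by ring
  calc sZ t β w * Hw t β c d
      = (((wordQ w : ℕ) : ℝ≥0∞) ^ (-2 * t) *
          (4 * ((c : ℕ) : ℝ≥0∞) * ((d : ℕ) : ℝ≥0∞)) ^ (-2 * t)) *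
          ((∏ i : Fin n, (((w i : ℕ) : ℝ≥0∞)) ^ (-2 * β)) *
            ((c : ℕ) : ℝ≥0∞) ^ (-2 * β) * ((d : ℕ) : ℝ≥0∞) ^ (-2 * β)) := by
        rw [sZ, Hw]; ring
    _ ≤ ((wordQ (extW w c d) : ℕ) : ℝ≥0∞) ^ (-2 * t) *
          ((∏ i : Fin n, (((w i : ℕ) : ℝ≥0∞)) ^ (-2 * β)) *
            ((c : ℕ) : ℝ≥0∞) ^ (-2 * β) * ((d : ℕ) : ℝ≥0∞) ^ (-2 * β)) :=
        mul_le_mul_left hQ _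
    _ = sZ t β (extW w c d) := by rw [sZ, prodExt]

lemma Zpart_step (n : ℕ) :
    Zpart t β (n + 2) = ∑' w : Fin n → ℕ+, ∑' q : ℕ+ × ℕ+, sZ t β (extW w q.1 q.2) := by
  have h1 : Zpart t β (n+2) = ∑' p : (Fin n → ℕ+) × ℕ+ × ℕ+, sZ t β (extW p.1 p.2.1 p.2.2) := by
    rw [Zpart_eq, ← (wordEquiv n).tsum_eq (fun w => sZ t β w)]
    exact tsum_congr fun p => by simp only [wordEquiv, Equiv.coe_fn_mk]
  have h2 := ENNReal.tsum_prod
    (f := fun (w : Fin n → ℕ+) (q : ℕ+ × ℕ+) => sZ t β (extW w q.1 q.2))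
  rw [h1, h2]

lemma Zpart_step_upper (ht : 0 ≤ t) (n : ℕ) :
    Zpart t β (n + 2) ≤ Zpart t β n * SG t β := by
  rw [Zpart_step]
  calc ∑' w : Fin n → ℕ+, ∑' q : ℕ+ × ℕ+, sZ t β (extW w q.1 q.2)
      ≤ ∑' w : Fin n → ℕ+, ∑' q : ℕ+ × ℕ+, sZ t β w * Gw t β q.1 q.2 :=
        ENNReal.tsum_le_tsum fun w => ENNReal.tsum_le_tsum fun q => sZ_ext_le t β ht w q.1 q.2
    _ = ∑' w : Fin n → ℕ+, sZ t β w * SG t β := by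
        congr 1; funext w; rw [ENNReal.tsum_mul_left]; rfl
    _ = Zpart t β n * SG t β := by rw [Zpart_eq, ENNReal.tsum_mul_right]

lemma Zpart_step_lower (ht : 0 ≤ t) (n : ℕ) :
    Zpart t β n * SH t β ≤ Zpart t β (n + 2) := by
  rw [Zpart_step]
  calc Zpart t β n * SH t β
      = ∑' w : Fin n → ℕ+, sZ t β w * SH t β := by rw [Zpart_eq, ENNReal.tsum_mul_right]
    _ = ∑' w : Fin n → ℕ+, ∑' q : ℕ+ × ℕ+, sZ t β w * Hw t β q.1 q.2 := by
        congr 1; funext w; rw [ENNReal.tsum_mul_left]; rfl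
    _ ≤ ∑' w : Fin n → ℕ+, ∑' q : ℕ+ × ℕ+, sZ t β (extW w q.1 q.2) :=
        ENNReal.tsum_le_tsum fun w => ENNReal.tsum_le_tsum fun q => sZ_ext_ge t β ht w q.1 q.2

lemma Zpart_zero : Zpart t β 0 = 1 := by
  rw [Zpart_eq]
  rw [tsum_eq_single (fun i : Fin 0 => (1 : ℕ+)) (fun b hb => absurd (Subsingleton.elim b _) hb)]
  simp [sZ, wordQ, qRec]

lemma Zpart_pos (n : ℕ) : 0 < Zpart t β n := by
  have h1 : 0 < sZ t β (fun _ : Fin n => (1 : ℕ+)) := by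
    rw [sZ]
    have hq : (1 : ℝ≥0∞) ≤ ((wordQ (fun _ : Fin n => (1 : ℕ+)) : ℕ) : ℝ≥0∞) := by
      exact_mod_cast wordQ_pos _
    refine mul_pos (ENNReal.rpow_pos (lt_of_lt_of_le one_pos hq) (by simp)).ne' ?_
    simp
  exact h1.trans_le (ENNReal.le_tsum _)

lemma Hw_ge (ht : 0 ≤ t) (c d : ℕ+) : (4 : ℝ≥0∞) ^ (-2 * t) * Gw t β c d ≤ Hw t β c d := by
  have h1 : (4 * ((c : ℕ) : ℝ≥0∞) * ((d : ℕ) : ℝ≥0∞)) ^ (-2 * t) =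
      (4 : ℝ≥0∞) ^ (-2 * t) * (((c : ℕ) : ℝ≥0∞) * ((d : ℕ) : ℝ≥0∞)) ^ (-2 * t) := by
    rw [mul_assoc, ENNReal.mul_rpow_of_ne_top (by simp) (by
      exact ENNReal.mul_ne_top (by simp) (by simp))]
  have h2 : Fe c d ^ (-2 * t) ≤ (((c : ℕ) : ℝ≥0∞) * ((d : ℕ) : ℝ≥0∞)) ^ (-2 * t) := by
    rw [show (-2 * t) = -(2 * t) by ring]
    exact rpow_neg_anti (Fe_ge c d) (by linarith)
  calc (4 : ℝ≥0∞) ^ (-2 * t) * Gw t β c d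
      = (4 : ℝ≥0∞) ^ (-2 * t) * Fe c d ^ (-2 * t) *
          (((c : ℕ) : ℝ≥0∞) ^ (-2 * β) * ((d : ℕ) : ℝ≥0∞) ^ (-2 * β)) := by rw [Gw]; ring
    _ ≤ (4 : ℝ≥0∞) ^ (-2 * t) * (((c : ℕ) : ℝ≥0∞) * ((d : ℕ) : ℝ≥0∞)) ^ (-2 * t) *
          (((c : ℕ) : ℝ≥0∞) ^ (-2 * β) * ((d : ℕ) : ℝ≥0∞) ^ (-2 * β)) :=
        mul_le_mul_left (mul_le_mul_right h2 _) _
    _ = Hw t β c d := by rw [Hw, h1]; ring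

lemma SH_ge (ht : 0 ≤ t) : (4 : ℝ≥0∞) ^ (-2 * t) * SG t β ≤ SH t β := by
  rw [SG, SH, ← ENNReal.tsum_mul_left]
  exact ENNReal.tsum_le_tsum fun q => Hw_ge t β ht q.1 q.2


/-- The real pair summand. -/
def rS (p : ℕ+ × ℕ+) : ℝ :=
  (((p.1 : ℕ) : ℝ) * ((p.2 : ℕ) : ℝ)) ^ (-2 * (t + β)) *
    (1 + 1 / (((p.1 : ℕ) : ℝ) * (((p.2 : ℕ) : ℝ) + 1))) ^ (-2 * t)

lemma rS_nonneg (p : ℕ+ × ℕ+) : 0 ≤ rS t β p := by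
  have h1 : (0:ℝ) < ((p.1 : ℕ) : ℝ) := by exact_mod_cast p.1.pos
  have h2 : (0:ℝ) < ((p.2 : ℕ) : ℝ) := by exact_mod_cast p.2.pos
  rw [rS]; positivity

lemma real_calc (x y : ℝ) (hx : 0 < x) (hy : 0 < y) :
    ((x * (y * (x + 1) + 1)) / (x + 1)) ^ (-2 * t) * x ^ (-2 * β) * y ^ (-2 * β)
      = (y * x) ^ (-2 * (t + β)) * (1 + 1 / (y * (x + 1))) ^ (-2 * t) := by
  have h0 : (0:ℝ) < 1 + 1 / (y * (x + 1)) := by positivity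
  have h1 : (y * x) * (1 + 1 / (y * (x + 1))) = (x * (y * (x + 1) + 1)) / (x + 1) := by
    field_simp
  have h2 : (-2 * (t + β)) = (-2 * β) + (-2 * t) := by ring
  rw [← h1, Real.mul_rpow (z := -2 * t) (by positivity) h0.le, h2,
    Real.rpow_add (mul_pos hy hx), Real.mul_rpow (z := -2 * β) hy.le hx.le]
  ring

lemma Fe_eq_ofReal (c d : ℕ+) :
    Fe c d = ENNReal.ofReal
      ((((c:ℕ):ℝ) * (((d:ℕ):ℝ) * (((c:ℕ):ℝ) + 1) + 1)) / (((c:ℕ):ℝ) + 1)) := by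
  rw [Fe, ← ENNReal.ofReal_natCast ((c:ℕ) * ((d:ℕ) * ((c:ℕ) + 1) + 1)),
    ← ENNReal.ofReal_natCast ((c:ℕ) + 1),
    ← ENNReal.ofReal_div_of_pos (by exact_mod_cast Nat.succ_pos _)]
  congr 1
  push_cast
  ring

lemma Gw_eq_ofReal (c d : ℕ+) : Gw t β c d = ENNReal.ofReal (rS t β (d, c)) := by
  have hc : (0:ℝ) < ((c : ℕ) : ℝ) := by exact_mod_cast c.pos
  have hd : (0:ℝ) < ((d : ℕ) : ℝ) := by exact_mod_cast d.pos
  have hFr : (0:ℝ) < (((c:ℕ):ℝ) * (((d:ℕ):ℝ) * (((c:ℕ):ℝ) + 1) + 1)) / (((c:ℕ):ℝ) + 1) := by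
    positivity
  rw [Gw, Fe_eq_ofReal, ← ENNReal.ofReal_natCast (c:ℕ), ← ENNReal.ofReal_natCast (d:ℕ),
    ENNReal.ofReal_rpow_of_pos hFr, ENNReal.ofReal_rpow_of_pos hc, ENNReal.ofReal_rpow_of_pos hd,
    ← ENNReal.ofReal_mul (by positivity), ← ENNReal.ofReal_mul (by positivity)]
  congr 1
  have h := real_calc t β ((c:ℕ):ℝ) ((d:ℕ):ℝ) hc hd
  simpa [rS] using h

lemma SG_eq : SG t β = ∑' p : ℕ+ × ℕ+, ENNReal.ofReal (rS t β p) := by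
  rw [SG, ← (Equiv.prodComm ℕ+ ℕ+).tsum_eq (fun p => ENNReal.ofReal (rS t β p))]
  refine tsum_congr fun q => ?_
  rw [Gw_eq_ofReal]
  simp [Equiv.prodComm_apply, Prod.swap]

lemma Zpart_le_pow (ht : 0 ≤ t) (m : ℕ) : Zpart t β (2 * m) ≤ SG t β ^ m := by
  induction m with
  | zero => simp [Zpart_zero]
  | succ m ih =>
    have e : 2 * (m + 1) = 2 * m + 2 := by ring
    rw [e, pow_succ]
    exact (Zpart_step_upper t β ht (2 * m)).trans (mul_le_mul_left ih _)

lemma Zpart_top (ht : 0 ≤ t) (htop : SG t β = ⊤) (n : ℕ) : Zpart t β (n + 2) = ⊤ := by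
  have hSH : SH t β = ⊤ := by
    have h4 : (4 : ℝ≥0∞) ^ (-2 * t) ≠ 0 :=
      (ENNReal.rpow_pos (by norm_num) (by norm_num)).ne'
    have := SH_ge t β ht
    rw [htop, ENNReal.mul_top h4] at this
    exact top_le_iff.1 this
  have h := Zpart_step_lower t β ht n
  rw [hSH, ENNReal.mul_top (Zpart_pos t β n).ne'] at h
  exact top_le_iff.1 h

end

/-- Upper bound for the pressure: for `t ≥ 0`,
`P(t,β) ≤ (1/2) log ∑_{(k,l)∈ℕ²} (kl)^{−2(t+β)} (1 + 1/(k(l+1)))^{−2t}`. -/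
theorem pressure_upper_bound (t β : ℝ) (ht : 0 ≤ t) (L : ℝ)
    (hL : Tendsto (fun n : ℕ => Real.log (Zpart t β n).toReal / n) atTop (nhds L)) :
    L ≤ (1 / 2) * Real.log (∑' p : ℕ+ × ℕ+,
        (((p.1 : ℕ) : ℝ) * ((p.2 : ℕ) : ℝ)) ^ (-2 * (t + β)) *
          (1 + 1 / (((p.1 : ℕ) : ℝ) * (((p.2 : ℕ) : ℝ) + 1))) ^ (-2 * t)) := by
  have hrs : (∑' p : ℕ+ × ℕ+,
      (((p.1 : ℕ) : ℝ) * ((p.2 : ℕ) : ℝ)) ^ (-2 * (t + β)) *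
        (1 + 1 / (((p.1 : ℕ) : ℝ) * (((p.2 : ℕ) : ℝ) + 1))) ^ (-2 * t)) =
      ∑' p : ℕ+ × ℕ+, rS t β p := rfl
  rw [hrs]
  by_cases htop : SG t β = ⊤
  · -- divergent case: `Z_n = ∞` eventually, so `L = 0`, and the RHS is `0` as well
    have hns : ¬ Summable (rS t β) := by
      intro hs
      have h1 := ENNReal.ofReal_tsum_of_nonneg (rS_nonneg t β) hs
      rw [← SG_eq, htop] at h1
      exact ENNReal.ofReal_ne_top h1
    rw [tsum_eq_zero_of_not_summable hns, Real.log_zero, mul_zero]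
    have hev : (fun n : ℕ => Real.log (Zpart t β n).toReal / n) =ᶠ[atTop] fun _ => (0:ℝ) := by
      refine Filter.eventually_atTop.2 ⟨2, fun n hn => ?_⟩
      obtain ⟨k, rfl⟩ : ∃ k, n = k + 2 := ⟨n - 2, by omega⟩
      have hzt := Zpart_top t β ht htop k
      simp [hzt]
    have hL0 : L = 0 := tendsto_nhds_unique (hL.congr' hev) tendsto_const_nhds
    exact hL0.le
  · -- convergent case
    have hsum : Summable (rS t β) := by
      have h1 : (∑' p : ℕ+ × ℕ+, ENNReal.ofReal (rS t β p)) ≠ ⊤ := by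
        rw [← SG_eq]; exact htop
      exact (ENNReal.summable_toReal h1).congr
        fun p => ENNReal.toReal_ofReal (rS_nonneg t β p)
    have hofS : ENNReal.ofReal (∑' p : ℕ+ × ℕ+, rS t β p) = SG t β := by
      rw [ENNReal.ofReal_tsum_of_nonneg (rS_nonneg t β) hsum, SG_eq]
    have hSreal : (SG t β).toReal = ∑' p : ℕ+ × ℕ+, rS t β p := by
      rw [← hofS, ENNReal.toReal_ofReal (tsum_nonneg (rS_nonneg t β))]
    rw [← hSreal]
    have key : ∀ m : ℕ, 1 ≤ m →
        Real.log (Zpart t β (2*m)).toReal / ((2*m : ℕ) : ℝ) ≤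
          (1/2) * Real.log (SG t β).toReal := by
      intro m hm
      have hb := Zpart_le_pow t β ht m
      have hZne : Zpart t β (2*m) ≠ ⊤ := ne_top_of_le_ne_top (ENNReal.pow_ne_top htop) hb
      have hZpos : 0 < (Zpart t β (2*m)).toReal :=
        ENNReal.toReal_pos (Zpart_pos t β _).ne' hZne
      have hlog : Real.log (Zpart t β (2*m)).toReal ≤ m * Real.log (SG t β).toReal := by
        calc Real.log (Zpart t β (2*m)).toReal
            ≤ Real.log ((SG t β ^ m).toReal) :=
              Real.log_le_log hZpos
                ((ENNReal.toReal_le_toReal hZne (ENNReal.pow_ne_top htop)).2 hb)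
          _ = Real.log ((SG t β).toReal ^ m) := by rw [ENNReal.toReal_pow]
          _ = m * Real.log (SG t β).toReal := by rw [Real.log_pow]
      have hmpos : (0:ℝ) < ((2*m : ℕ) : ℝ) := by exact_mod_cast (by omega : 0 < 2*m)
      have hm' : ((m:ℕ) : ℝ) ≠ 0 := Nat.cast_ne_zero.2 (by omega)
      calc Real.log (Zpart t β (2*m)).toReal / ((2*m : ℕ) : ℝ)
          ≤ ((m : ℝ) * Real.log (SG t β).toReal) / ((2*m : ℕ) : ℝ) :=
            (div_le_div_iff_of_pos_right hmpos).2 hlog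
        _ = (1/2) * Real.log (SG t β).toReal := by
            push_cast
            field_simp
    have h2m : Tendsto (fun m : ℕ => 2 * m) atTop atTop :=
      Filter.tendsto_atTop_mono (fun m : ℕ => Nat.le_mul_of_pos_left m (by norm_num)) Filter.tendsto_id
    have hc : Tendsto (fun m : ℕ => Real.log (Zpart t β (2*m)).toReal / ((2*m : ℕ) : ℝ))
        atTop (nhds L) := hL.comp h2m
    exact le_of_tendsto hc (Filter.eventually_atTop.2 ⟨1, fun m hm => key m hm⟩)
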